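/- In a commutative reduced ring R, for finitely many elements f₁,...,fₙ ∈ R, the intersection V(f₁) ∩ ... ∩ V(fₙ) of their vanishing sets in the minimal prime spectrum is empty if and only if ann(f₁) ∩ ... ∩ ann(fₙ) = 0. -/

import Mathlib

/-- The minimal prime spectrum of `R`, with the subspace (Zariski) topology. -/
abbrev MinSpec (R : Type*) [CommRing R] :=
  {P : PrimeSpectrum R // P.asIdeal ∈ minimalPrimes R}

lemma exists_mul_eq_zero_of_mem_minimal {R : Type*} [CommRing R] [IsReduced R]
    {P : Ideal R} [P.IsPrime] (hP : P ∈ minimalPrimes R) {f : R} (hf : f ∈ P) :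
    ∃ s ∉ P, s * f = 0 := by
  have h1 : algebraMap R (Localization P.primeCompl) f ∈
      IsLocalRing.maximalIdeal (Localization P.primeCompl) :=
    (IsLocalization.AtPrime.to_map_mem_maximal_iff _ P f).mpr hf
  have h2 : IsNilpotent (algebraMap R (Localization P.primeCompl) f) :=
    by
      have := Ring.KrullDimLE.of_isLocalization P hP (Localization P.primeCompl)
      exact Ring.KrullDimLE.isNilpotent_iff_mem_maximalIdeal.mpr h1
  obtain ⟨n, hn⟩ := h2
  rw [← map_pow, IsLocalization.map_eq_zero_iff P.primeCompl] at hn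
  obtain ⟨⟨s, hs⟩, hsf⟩ := hn
  refine ⟨s, hs, ?_⟩
  have : (s * f) ^ (n + 1) = 0 := by
    have : s * f ^ n = 0 := hsf
    rcases n with _ | n
    · simp only [pow_zero, mul_one] at this
      subst this; simp
    · calc (s * f) ^ (n + 1 + 1) = s ^ (n + 1) * f * (s * f ^ (n + 1)) := by ring
        _ = 0 := by rw [this, mul_zero]
  exact IsReduced.eq_zero _ ⟨n + 1, this⟩

/-- ⋂ V(fᵢ) = ∅ iff ⋂ ann(fᵢ) = 0. -/
theorem inter_vanishing_empty_iff (R : Type*) [CommRing R] [IsReduced R]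
    (n : ℕ) (f : Fin n → R) :
    (⋂ i, {P : MinSpec R | f i ∈ P.1.asIdeal}) = ∅ ↔
      (⋂ i, {a : R | a * f i = 0}) = {0} := by
  constructor
  · intro h
    ext a
    simp only [Set.mem_iInter, Set.mem_setOf_eq, Set.mem_singleton_iff]
    constructor
    · intro ha
      by_contra ha0
      -- a ≠ 0, so a ∉ nilradical, so some minimal prime avoids a
      have : a ∉ nilradical R := by
        rw [nilradical_eq_zero]; simpa using ha0
      rw [nilradical_eq_sInf, Submodule.mem_sInf] at this
      push_neg at this
      obtain ⟨P, hPpr, haP⟩ := this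
      haveI hPprime : Ideal.IsPrime P := hPpr
      obtain ⟨Q, hQmin, hQle⟩ := Ideal.exists_minimalPrimes_le (I := (⊥ : Ideal R)) (J := P) bot_le
      have hQmin' : Q ∈ minimalPrimes R := hQmin
      haveI hQprime : Q.IsPrime := hQmin'.1.1
      have haQ : a ∉ Q := fun hh => haP (hQle hh)
      have : (⟨⟨Q, hQprime⟩, hQmin'⟩ : MinSpec R) ∈ ⋂ i, {P : MinSpec R | f i ∈ P.1.asIdeal} := by
        simp only [Set.mem_iInter, Set.mem_setOf_eq]
        intro i
        have := ha i
        rcases hQprime.mem_or_mem (this ▸ Q.zero_mem : a * f i ∈ Q) with h' | h'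
        · exact absurd h' haQ
        · exact h'
      rw [h] at this
      exact this.elim
    · rintro rfl i; simp
  · intro h
    rw [Set.eq_empty_iff_forall_notMem]
    rintro ⟨P, hPmin⟩ hP
    simp only [Set.mem_iInter, Set.mem_setOf_eq] at hP
    haveI : P.asIdeal.IsPrime := P.isPrime
    -- for each i, find sᵢ ∉ P with sᵢ * fᵢ = 0
    choose s hs hsf using fun i => exists_mul_eq_zero_of_mem_minimal hPmin (hP i)
    set t := ∏ i, s i with ht
    have htP : t ∉ P.asIdeal := by
      intro htP
      obtain ⟨i, hi⟩ := (Ideal.IsPrime.prod_mem_iff (p := P.asIdeal)).mp htP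
      exact hs i hi.2
    have htf : t ∈ ⋂ i, {a : R | a * f i = 0} := by
      simp only [Set.mem_iInter, Set.mem_setOf_eq]
      intro i
      have : t = (∏ j ∈ Finset.univ.erase i, s j) * s i := by
        rw [ht, ← Finset.prod_erase_mul _ _ (Finset.mem_univ i)]
      rw [this, mul_assoc, hsf i, mul_zero]
    rw [h] at htf
    exact htP (htf ▸ P.asIdeal.zero_mem)
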